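/- Under the genericness assumption, the largest Freidlin's cycle C_k containing the sink s*_k and not containing any state of smaller potential equals { s ∈ t_k : max of V_{ij} over edges of the unique tree path from s*_k to s is less than V_{p*_{k−1} q*_{k−1}} }, and in particular C_k is contained in the component t_k of the optimal forest T*_k containing s*_k. -/

import Mathlib

open Finset

/-- A `W`-graph on the network `G` with sink set `W`: every non-sink state `i` has exactly
one outgoing arrow `i → next i` along an edge of `G`, sinks are encoded as fixed points of
`next`, and from every state some iterate of `next` reaches a sink (no cycles). -/
structure WGraph {V : Type*} (G : SimpleGraph V) (W : Finset V) where
  next : V → V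
  adj_of_not_sink : ∀ i ∉ W, G.Adj i (next i)
  sink_fixed : ∀ i ∈ W, next i = i
  absorbed : ∀ i : V, ∃ n : ℕ, next^[n] i ∈ W

/-- The cost `∑_{(i → j)} (V_{ij} - V_i)` of a `W`-graph, the sum running over its arrows. -/
def wcost {V : Type*} [Fintype V] [DecidableEq V] {G : SimpleGraph V} {W : Finset V}
    (Ve : Sym2 V → ℝ) (Vp : V → ℝ) (g : WGraph G W) : ℝ :=
  ∑ i ∈ Wᶜ, (Ve s(i, g.next i) - Vp i)

/-- The (undirected) edge set of the forest underlying a `W`-graph. -/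
def wEdges {V : Type*} [Fintype V] [DecidableEq V] {G : SimpleGraph V} {W : Finset V}
    (g : WGraph G W) : Finset (Sym2 V) :=
  Wᶜ.image fun i => s(i, g.next i)

/-- An optimal `W`-graph with `k` sinks: one minimizing the cost among all `W`-graphs
on `G` with `k` sinks. -/
def IsOptimalWGraph {V : Type*} [Fintype V] [DecidableEq V] (G : SimpleGraph V)
    (Ve : Sym2 V → ℝ) (Vp : V → ℝ) (k : ℕ) (W : Finset V) (g : WGraph G W) : Prop :=
  W.card = k ∧
    ∀ (W' : Finset V) (g' : WGraph G W'), W'.card = k →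
      wcost Ve Vp g ≤ wcost Ve Vp g'

/-- Assumption 1 (genericness): all vertex potentials are distinct, all edge potentials
(on edges of `G`) are distinct, and all differences `V_{ij} - V_k` are distinct. -/
def Generic {V : Type*} (G : SimpleGraph V) (Ve : Sym2 V → ℝ) (Vp : V → ℝ) : Prop :=
  Function.Injective Vp ∧
  (∀ e ∈ G.edgeSet, ∀ f ∈ G.edgeSet, Ve e = Ve f → e = f) ∧
  (∀ e ∈ G.edgeSet, ∀ f ∈ G.edgeSet, ∀ i j : V,
      Ve e - Vp i = Ve f - Vp j → e = f ∧ i = j)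

/-- A minimum spanning tree of a weighted graph. -/
def IsMST {V : Type*} (G : SimpleGraph V) (c : Sym2 V → ℝ) (T : SimpleGraph V) : Prop :=
  T.IsTree ∧ T ≤ G ∧
    ∀ T' : SimpleGraph V, T'.IsTree → T' ≤ G →
      (∑ᶠ e ∈ T.edgeSet, c e) ≤ ∑ᶠ e ∈ T'.edgeSet, c e

/-- A Freidlin's cycle containing the state `s`, relative to the minimum spanning tree
`T`: a set of the form `{x | max_{(i,j) ∈ w*(s,x)} V_{ij} < a}` for some constant `a`,
where `w*(s,x)` is the unique path in `T` joining `s` and `x`. -/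
def IsFreidlinCycle {V : Type*} (T : SimpleGraph V) (Ve : Sym2 V → ℝ) (s : V)
    (C : Set V) : Prop :=
  ∃ a : ℝ, C = {x : V | ∀ p : T.Walk s x, p.IsPath →
    (p.edges.map Ve).maximum < (a : WithBot ℝ)}

set_option linter.unusedSectionVars false
namespace FCP

variable {V : Type*} [DecidableEq V] {G : SimpleGraph V} {W : Finset V}

/-- once in `W`, the orbit is constant -/
lemma iter_of_mem (g : WGraph G W) {i : V} (h : i ∈ W) (m : ℕ) : g.next^[m] i = i := by
  induction m with
  | zero => rfl
  | succ m ih => rw [Function.iterate_succ_apply', ih, g.sink_fixed i h]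

lemma iter_stay (g : WGraph G W) {x : V} {m : ℕ} (h : g.next^[m] x ∈ W) {l : ℕ} (hl : m ≤ l) :
    g.next^[l] x = g.next^[m] x := by
  obtain ⟨d, rfl⟩ := Nat.exists_eq_add_of_le hl
  rw [Nat.add_comm, Function.iterate_add_apply]
  exact iter_of_mem g h d

/-- index of absorption -/
def sinkIdx (g : WGraph G W) (x : V) : ℕ := Nat.find (g.absorbed x)

lemma sinkIdx_spec (g : WGraph G W) (x : V) : g.next^[sinkIdx g x] x ∈ W :=
  Nat.find_spec (g.absorbed x)

lemma sinkIdx_min (g : WGraph G W) {x : V} {m : ℕ} (h : m < sinkIdx g x) :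
    g.next^[m] x ∉ W := Nat.find_min (g.absorbed x) h

/-- the sink absorbing `x` -/
def gsink (g : WGraph G W) (x : V) : V := g.next^[sinkIdx g x] x

lemma gsink_mem (g : WGraph G W) (x : V) : gsink g x ∈ W := sinkIdx_spec g x

lemma gsink_eq_iter (g : WGraph G W) {x : V} {m : ℕ} (h : g.next^[m] x ∈ W) :
    g.next^[m] x = gsink g x := by
  rcases le_total m (sinkIdx g x) with hle | hle
  · rcases lt_or_eq_of_le hle with hlt | rfl
    · exact absurd h (sinkIdx_min g hlt)
    · rfl
  · exact iter_stay g (sinkIdx_spec g x) hle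

lemma gsink_of_mem (g : WGraph G W) {x : V} (h : x ∈ W) : gsink g x = x := by
  have : g.next^[0] x ∈ W := h
  exact (gsink_eq_iter g this).symm

lemma gsink_iterate (g : WGraph G W) (x : V) (a : ℕ) :
    gsink g (g.next^[a] x) = gsink g x := by
  have h1 : g.next^[sinkIdx g (g.next^[a] x) + a] x ∈ W := by
    rw [Function.iterate_add_apply]; exact sinkIdx_spec g _
  have := gsink_eq_iter g h1
  rw [← this, Function.iterate_add_apply]; rfl

/-- `v` lies on the forward orbit of `x` -/
def reach (g : WGraph G W) (x v : V) : Prop := ∃ n : ℕ, g.next^[n] x = v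

lemma reach_refl (g : WGraph G W) (x : V) : reach g x x := ⟨0, rfl⟩

lemma reach_iter (g : WGraph G W) (x : V) (n : ℕ) : reach g x (g.next^[n] x) := ⟨n, rfl⟩

lemma reach_gsink (g : WGraph G W) (x : V) : reach g x (gsink g x) := ⟨_, rfl⟩

lemma reach_trans {g : WGraph G W} {x v z : V} (h1 : reach g x v) (h2 : reach g v z) :
    reach g x z := by
  obtain ⟨a, rfl⟩ := h1; obtain ⟨b, rfl⟩ := h2
  exact ⟨b + a, (Function.iterate_add_apply _ _ _ _)⟩

lemma gsink_of_reach {g : WGraph G W} {x v : V} (h : reach g x v) :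
    gsink g v = gsink g x := by
  obtain ⟨a, rfl⟩ := h; exact gsink_iterate g x a

lemma not_mem_of_reach {g : WGraph G W} {x v : V} (h : reach g x v) (hv : v ∉ W) : x ∉ W := by
  intro hx
  obtain ⟨a, rfl⟩ := h
  exact hv (by rw [iter_of_mem g hx]; exact hx)

/-- strict injectivity of the orbit before absorption -/
lemma orbit_inj (g : WGraph G W) (x : V) {j j' : ℕ} (hjj : j < j')
    (hW : ∀ i, i < j' → g.next^[i] x ∉ W)
    (heq : g.next^[j] x = g.next^[j'] x) : False := by
  set p := j' - j with hp
  have hp0 : 0 < p := Nat.sub_pos_of_lt hjj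
  have hper : ∀ m : ℕ, g.next^[j + m * p] x = g.next^[j] x := by
    intro m
    induction m with
    | zero => simp
    | succ m ih =>
      have : j + (m + 1) * p = p + (j + m * p) := by ring
      rw [this, Function.iterate_add_apply, ih]
      have : g.next^[p] (g.next^[j] x) = g.next^[j] x := by
        rw [← Function.iterate_add_apply, hp, Nat.sub_add_cancel (le_of_lt hjj), ← heq]
      rw [this]
  -- absorption index
  obtain ⟨N, hN⟩ := g.absorbed x
  -- find m with j + m * p ≥ N and reduce mod
  have key : ∀ M : ℕ, N ≤ M → g.next^[M] x ∈ W := fun M hM => by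
    rw [iter_stay g hN hM]; exact hN
  have hbig : N ≤ j + N * p := by
    calc N ≤ N * p := Nat.le_mul_of_pos_right _ hp0
    _ ≤ j + N * p := Nat.le_add_left _ _
  have := key _ hbig
  rw [hper N] at this
  exact hW j hjj this

section Redirect

variable (g : WGraph G W) (x : V) (n : ℕ) (y : V) (W₁ : Finset V)

open Classical in
/-- redirected next-map: reverse the orbit path `x, g.next x, ..., g.next^[n] x`,
    send `x` to `y`, make `W₁` the sinks. -/
noncomputable def rnext : V → V := fun z =>
  if z ∈ W₁ then z
  else if h : ∃ j, j < n ∧ g.next^[j+1] x = z then g.next^[Nat.find h] x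
  else if z = x then y else g.next z

/-- hypotheses for the redirect surgery -/
structure RHyp : Prop where
  h1 : ∀ j, j < n → g.next^[j] x ∉ W
  h2 : ∀ j, 1 ≤ j → j ≤ n → g.next^[j] x ∉ W₁
  h3 : ∀ z ∈ W, z ∉ W₁ → z = g.next^[n] x
  h4 : ∀ z ∈ W₁, z ∉ W → z = x
  h5 : (y = x ∧ x ∈ W₁) ∨
    (G.Adj x y ∧ (∀ m j, j ≤ n → g.next^[m] y ≠ g.next^[j] x) ∧ x ∉ W₁)

variable {g x n y W₁} (H : RHyp g x n y W₁)

include H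

lemma uinj {j j' : ℕ} (hj : j ≤ n) (hj' : j' ≤ n)
    (h : g.next^[j] x = g.next^[j'] x) : j = j' := by
  rcases lt_trichotomy j j' with hlt | he | hlt
  · exact absurd h (fun hh => orbit_inj g x hlt (fun i hi => H.h1 i (lt_of_lt_of_le hi hj')) hh)
  · exact he
  · exact absurd h.symm (fun hh => orbit_inj g x hlt (fun i hi => H.h1 i (lt_of_lt_of_le hi hj)) hh)

lemma r_sink {z : V} (hz : z ∈ W₁) : rnext g x n y W₁ z = z := by
  unfold rnext; rw [if_pos hz]

lemma r_path {j : ℕ} (hj : j < n) :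
    rnext g x n y W₁ (g.next^[j+1] x) = g.next^[j] x := by
  unfold rnext
  rw [if_neg (H.h2 (j+1) (Nat.succ_le_succ (Nat.zero_le _)) hj)]
  have hex : ∃ j', j' < n ∧ g.next^[j'+1] x = g.next^[j+1] x := ⟨j, hj, rfl⟩
  rw [dif_pos hex]
  have hspec := Nat.find_spec hex
  have : Nat.find hex + 1 = j + 1 :=
    uinj H (Nat.succ_le_of_lt hspec.1) hj (hspec.2)
  rw [Nat.succ_injective this]

lemma r_off {z : V} (hz : z ∉ W₁) (hp : ∀ j, j ≤ n → g.next^[j] x ≠ z) :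
    rnext g x n y W₁ z = g.next z := by
  unfold rnext
  rw [if_neg hz, dif_neg, if_neg]
  · exact fun he => hp 0 (Nat.zero_le _) he.symm
  · rintro ⟨j, hj, he⟩
    exact hp (j+1) (Nat.succ_le_of_lt hj) he

lemma r_x (hx : x ∉ W₁) : rnext g x n y W₁ x = y := by
  unfold rnext
  rw [if_neg hx, dif_neg, if_pos rfl]
  rintro ⟨j, hj, he⟩
  have : j + 1 = 0 := uinj H (Nat.succ_le_of_lt hj) (Nat.zero_le _) he
  exact Nat.succ_ne_zero j this

lemma r_notW {z : V} (hz : z ∉ W₁) (hp : ∀ j, j ≤ n → g.next^[j] x ≠ z) : z ∉ W := by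
  intro hzW
  exact hp n le_rfl (H.h3 z hzW hz).symm

lemma sinkIdx_next {z : V} (hz : z ∉ W) : sinkIdx g (g.next z) + 1 = sinkIdx g z := by
  have h0 : 0 < sinkIdx g z := by
    rcases Nat.eq_zero_or_pos (sinkIdx g z) with h | h
    · have hs := sinkIdx_spec g z
      rw [h] at hs
      simp only [Function.iterate_zero, id] at hs
      exact absurd hs hz
    · exact h
  have hle : sinkIdx g (g.next z) ≤ sinkIdx g z - 1 := by
    apply Nat.find_le
    show g.next^[sinkIdx g z - 1] (g.next z) ∈ W
    rw [← Function.iterate_succ_apply, Nat.succ_eq_add_one, Nat.sub_add_cancel h0]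
    exact sinkIdx_spec g z
  have hge : sinkIdx g z ≤ sinkIdx g (g.next z) + 1 := by
    apply Nat.find_le
    show g.next^[sinkIdx g (g.next z) + 1] z ∈ W
    rw [Function.iterate_add_apply]
    simpa using sinkIdx_spec g (g.next z)
  omega

lemma absorb_off : ∀ z, (∀ m j, j ≤ n → g.next^[m] z ≠ g.next^[j] x) →
    ∃ m, (rnext g x n y W₁)^[m] z ∈ W₁ := by
  intro z havoid
  generalize hN : sinkIdx g z = N
  induction N generalizing z with
  | zero =>
    have hzW : z ∈ W := by
      have := sinkIdx_spec g z; rw [hN] at this; exact this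
    by_cases hz1 : z ∈ W₁
    · exact ⟨0, hz1⟩
    · exact absurd ((H.h3 z hzW hz1)) (havoid 0 n le_rfl)
  | succ N ih =>
    by_cases hz1 : z ∈ W₁
    · exact ⟨0, hz1⟩
    have hzW : z ∉ W := r_notW H hz1 (fun j hj he => havoid 0 j hj he.symm)
    have hr : rnext g x n y W₁ z = g.next z :=
      r_off H hz1 (fun j hj he => havoid 0 j hj he.symm)
    have hN' : sinkIdx g (g.next z) = N := by
      have := sinkIdx_next H (z := z) hzW; omega
    obtain ⟨m, hm⟩ := ih (g.next z)
      (fun m j hj => by rw [← Function.iterate_succ_apply]; exact havoid (m+1) j hj) hN'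
    exact ⟨m + 1, by rw [Function.iterate_add_apply, Function.iterate_one, hr]; exact hm⟩

lemma absorb_path : ∀ j, j ≤ n → ∃ m, (rnext g x n y W₁)^[m] (g.next^[j] x) ∈ W₁ := by
  have key : ∀ j, j ≤ n → (rnext g x n y W₁)^[j] (g.next^[j] x) = x := by
    intro j
    induction j with
    | zero => intro _; rfl
    | succ j ih =>
      intro hj
      rw [Function.iterate_succ_apply, r_path H (Nat.lt_of_succ_le hj)]
      exact ih (Nat.le_of_succ_le hj)
  intro j hj
  rcases H.h5 with ⟨hy, hx1⟩ | ⟨hadj, havoid, hx1⟩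
  · exact ⟨j, by rw [key j hj]; exact hx1⟩
  · have hx : (rnext g x n y W₁)^[j+1] (g.next^[j] x) = y := by
      rw [Function.iterate_succ_apply', key j hj, r_x H hx1]
    obtain ⟨m, hm⟩ := absorb_off H y havoid
    refine ⟨m + (j+1), ?_⟩
    rw [Function.iterate_add_apply, hx]; exact hm

lemma absorb_all : ∀ z, ∃ m, (rnext g x n y W₁)^[m] z ∈ W₁ := by
  have hit : ∀ M : ℕ, ∀ z, (∃ j, j ≤ n ∧ g.next^[M] z = g.next^[j] x) →
      (∀ m, m < M → ∀ j, j ≤ n → g.next^[m] z ≠ g.next^[j] x) →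
      ∃ m, (rnext g x n y W₁)^[m] z ∈ W₁ := by
    intro M
    induction M with
    | zero =>
      rintro z ⟨j, hj, he⟩ _
      rw [show z = g.next^[j] x from he]
      exact absorb_path H j hj
    | succ M ih =>
      rintro z ⟨j, hj, he⟩ hmin
      by_cases hz1 : z ∈ W₁
      · exact ⟨0, hz1⟩
      have hnp : ∀ j', j' ≤ n → g.next^[j'] x ≠ z :=
        fun j' hj' hee => hmin 0 (Nat.succ_pos _) j' hj' hee.symm
      have hr : rnext g x n y W₁ z = g.next z := r_off H hz1 hnp
      obtain ⟨m, hm⟩ := ih (g.next z)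
        ⟨j, hj, by rw [← Function.iterate_succ_apply]; exact he⟩
        (fun m hm j' hj' => by
          rw [← Function.iterate_succ_apply]
          exact hmin (m+1) (Nat.succ_lt_succ hm) j' hj')
      exact ⟨m + 1, by rw [Function.iterate_add_apply, Function.iterate_one, hr]; exact hm⟩
  intro z
  by_cases hhit : ∃ M, ∃ j, j ≤ n ∧ g.next^[M] z = g.next^[j] x
  · classical
    exact hit (Nat.find hhit) z (Nat.find_spec hhit)
      (fun m hmlt j hj he => Nat.find_min hhit hmlt ⟨j, hj, he⟩)
  · push_neg at hhit
    exact absorb_off H z (fun m j hj => hhit m j hj)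

lemma adj_all : ∀ z ∉ W₁, G.Adj z (rnext g x n y W₁ z) := by
  intro z hz1
  by_cases hp : ∃ j, j ≤ n ∧ g.next^[j] x = z
  · obtain ⟨j, hj, rfl⟩ := hp
    cases j with
    | zero =>
      simp only [Function.iterate_zero, id]
      rcases H.h5 with ⟨hy, hx1⟩ | ⟨hadj, havoid, hx1⟩
      · exact absurd hx1 hz1
      · rw [r_x H hx1]; exact hadj
    | succ j =>
      rw [r_path H (Nat.lt_of_succ_le hj)]
      have hit : g.next^[j+1] x = g.next (g.next^[j] x) := Function.iterate_succ_apply' _ _ _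
      rw [hit]
      exact (g.adj_of_not_sink (g.next^[j] x) (H.h1 j (Nat.lt_of_succ_le hj))).symm
  · push_neg at hp
    rw [r_off H hz1 (fun j hj => hp j hj)]
    exact g.adj_of_not_sink z (r_notW H hz1 (fun j hj => hp j hj))

/-- the redirected `W`-graph -/
noncomputable def redirect : WGraph G W₁ :=
  ⟨rnext g x n y W₁, adj_all H, fun i hi => r_sink H hi, absorb_all H⟩

/-- cost of the redirected graph -/
theorem redirect_cost [Fintype V] (Ve : Sym2 V → ℝ) (Vp : V → ℝ) :
    wcost Ve Vp (redirect H) = wcost Ve Vp g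
      + (if x ∈ W₁ then 0 else Ve s(x, y))
      - (if g.next^[n] x ∈ W then 0 else Ve s(g.next^[n] x, g.next (g.next^[n] x)))
      + (if x ∈ W₁ then Vp x else 0)
      - (if g.next^[n] x ∈ W then Vp (g.next^[n] x) else 0) := by
  classical
  set u : ℕ → V := fun j => g.next^[j] x with hu
  set PF : Finset V := (Finset.range (n+1)).image u with hPF
  set rn : V → V := rnext g x n y W₁ with hrn
  set f₁ : V → ℝ := fun z => Ve s(z, rn z) - Vp z with hf₁
  set f₀ : V → ℝ := fun z => Ve s(z, g.next z) - Vp z with hf₀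
  have hmemPF : ∀ z, z ∈ PF ↔ ∃ j, j ≤ n ∧ u j = z := by
    intro z
    simp only [hPF, Finset.mem_image, Finset.mem_range, Nat.lt_succ_iff]
  have hinj : ∀ a ∈ Finset.range (n+1), ∀ b ∈ Finset.range (n+1), u a = u b → a = b := by
    intro a ha b hb hab
    exact uinj H (Nat.lt_succ_iff.mp (Finset.mem_range.mp ha))
      (Nat.lt_succ_iff.mp (Finset.mem_range.mp hb)) hab
  have hnext1 : (redirect H).next = rn := rfl
  have split1 : wcost Ve Vp (redirect H) = ∑ z ∈ W₁ᶜ ∩ PF, f₁ z + ∑ z ∈ W₁ᶜ \ PF, f₁ z := by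
    rw [wcost]
    simp only [hnext1]
    exact (Finset.sum_inter_add_sum_sdiff _ _ _).symm
  have split0 : wcost Ve Vp g = ∑ z ∈ Wᶜ ∩ PF, f₀ z + ∑ z ∈ Wᶜ \ PF, f₀ z := by
    rw [wcost]
    exact (Finset.sum_inter_add_sum_sdiff _ _ _).symm
  have hsetoff : W₁ᶜ \ PF = Wᶜ \ PF := by
    ext z
    simp only [Finset.mem_sdiff, Finset.mem_compl]
    constructor
    · rintro ⟨hz1, hz2⟩
      refine ⟨fun hzW => ?_, hz2⟩
      exact hz2 ((hmemPF z).mpr ⟨n, le_rfl, (H.h3 z hzW hz1).symm⟩)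
    · rintro ⟨hz1, hz2⟩
      refine ⟨fun hzW1 => ?_, hz2⟩
      exact hz2 ((hmemPF z).mpr ⟨0, Nat.zero_le _, (H.h4 z hzW1 hz1).symm⟩)
  have hoff : ∑ z ∈ W₁ᶜ \ PF, f₁ z = ∑ z ∈ Wᶜ \ PF, f₀ z := by
    rw [hsetoff]
    apply Finset.sum_congr rfl
    intro z hz
    rw [Finset.mem_sdiff, Finset.mem_compl] at hz
    have hz1 : z ∉ W₁ := by
      have hzz : z ∈ W₁ᶜ \ PF := by
        rw [hsetoff]
        exact Finset.mem_sdiff.mpr ⟨Finset.mem_compl.mpr hz.1, hz.2⟩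
      exact Finset.mem_compl.mp (Finset.mem_sdiff.mp hzz).1
    have hrw : rn z = g.next z := by
      rw [hrn]
      exact r_off H hz1 (fun j hj he => hz.2 ((hmemPF z).mpr ⟨j, hj, he⟩))
    simp only [hf₁, hf₀, hrw]
  have hA : ∑ z ∈ Wᶜ ∩ PF, f₀ z
      = ∑ j ∈ Finset.range (n+1), (if u j ∉ W then f₀ (u j) else 0) := by
    have hseteq : Wᶜ ∩ PF = ((Finset.range (n+1)).filter (fun j => u j ∉ W)).image u := by
      ext z
      simp only [Finset.mem_inter, Finset.mem_compl, Finset.mem_image, Finset.mem_filter,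
        Finset.mem_range]
      constructor
      · rintro ⟨hzW, hzPF⟩
        obtain ⟨j, hj, hje⟩ := (hmemPF z).mp hzPF
        exact ⟨j, ⟨Nat.lt_succ_of_le hj, by rw [hje]; exact hzW⟩, hje⟩
      · rintro ⟨j, ⟨hj, hjW⟩, rfl⟩
        exact ⟨hjW, (hmemPF _).mpr ⟨j, Nat.lt_succ_iff.mp hj, rfl⟩⟩
    rw [hseteq, Finset.sum_image (fun a ha b hb => hinj a (Finset.mem_of_mem_filter a ha) b
      (Finset.mem_of_mem_filter b hb)), Finset.sum_filter]
  have hB : ∑ z ∈ W₁ᶜ ∩ PF, f₁ z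
      = ∑ j ∈ Finset.range (n+1), (if u j ∉ W₁ then f₁ (u j) else 0) := by
    have hseteq : W₁ᶜ ∩ PF = ((Finset.range (n+1)).filter (fun j => u j ∉ W₁)).image u := by
      ext z
      simp only [Finset.mem_inter, Finset.mem_compl, Finset.mem_image, Finset.mem_filter,
        Finset.mem_range]
      constructor
      · rintro ⟨hzW, hzPF⟩
        obtain ⟨j, hj, hje⟩ := (hmemPF z).mp hzPF
        exact ⟨j, ⟨Nat.lt_succ_of_le hj, by rw [hje]; exact hzW⟩, hje⟩
      · rintro ⟨j, ⟨hj, hjW⟩, rfl⟩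
        exact ⟨hjW, (hmemPF _).mpr ⟨j, Nat.lt_succ_iff.mp hj, rfl⟩⟩
    rw [hseteq, Finset.sum_image (fun a ha b hb => hinj a (Finset.mem_of_mem_filter a ha) b
      (Finset.mem_of_mem_filter b hb)), Finset.sum_filter]
  have hA2 : ∑ j ∈ Finset.range (n+1), (if u j ∉ W then f₀ (u j) else 0)
      = (∑ j ∈ Finset.range n, (Ve s(u j, u (j+1)) - Vp (u j)))
        + (if g.next^[n] x ∈ W then 0 else Ve s(u n, g.next (u n)) - Vp (u n)) := by
    rw [Finset.sum_range_succ]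
    congr 1
    · apply Finset.sum_congr rfl
      intro j hj
      rw [if_pos (H.h1 j (Finset.mem_range.mp hj))]
      simp only [hf₀]
      have hstep : u (j+1) = g.next (u j) := Function.iterate_succ_apply' _ _ _
      rw [hstep]
    · by_cases hun : g.next^[n] x ∈ W
      · rw [if_neg (by simpa [hu] using hun), if_pos hun]
      · rw [if_pos (by simpa [hu] using hun), if_neg hun]
  have hB2 : ∑ j ∈ Finset.range (n+1), (if u j ∉ W₁ then f₁ (u j) else 0)
      = (∑ j ∈ Finset.range n, (Ve s(u j, u (j+1)) - Vp (u (j+1))))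
        + (if x ∈ W₁ then 0 else Ve s(x, y) - Vp x) := by
    rw [Finset.sum_range_succ']
    congr 1
    · apply Finset.sum_congr rfl
      intro j hj
      rw [if_pos (H.h2 (j+1) (Nat.succ_le_succ (Nat.zero_le _))
        (Nat.succ_le_of_lt (Finset.mem_range.mp hj)))]
      simp only [hf₁]
      have h1 : rn (u (j+1)) = u j := r_path H (Finset.mem_range.mp hj)
      rw [h1, Sym2.eq_swap]
    · by_cases hx1 : x ∈ W₁
      · rw [if_neg (by simpa [hu] using hx1), if_pos hx1]
      · rw [if_pos (by simpa [hu] using hx1), if_neg hx1]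
        simp only [hf₁]
        have h1 : rn (u 0) = y := r_x H hx1
        simp only [hu] at h1 ⊢
        rw [show (g.next^[0] x) = x from rfl] at h1 ⊢
        rw [h1]
  have htel : ∑ j ∈ Finset.range n, (Vp (u (j+1)) - Vp (u j)) = Vp (u n) - Vp (u 0) :=
    Finset.sum_range_sub (fun j => Vp (u j)) n
  have hsplitsumA : ∑ j ∈ Finset.range n, (Ve s(u j, u (j+1)) - Vp (u j))
      = ∑ j ∈ Finset.range n, Ve s(u j, u (j+1)) - ∑ j ∈ Finset.range n, Vp (u j) :=
    Finset.sum_sub_distrib _ _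
  have hsplitsumB : ∑ j ∈ Finset.range n, (Ve s(u j, u (j+1)) - Vp (u (j+1)))
      = ∑ j ∈ Finset.range n, Ve s(u j, u (j+1)) - ∑ j ∈ Finset.range n, Vp (u (j+1)) :=
    Finset.sum_sub_distrib _ _
  have htel2 : ∑ j ∈ Finset.range n, Vp (u (j+1)) - ∑ j ∈ Finset.range n, Vp (u j)
      = Vp (u n) - Vp (u 0) := by
    rw [← htel]
    exact (Finset.sum_sub_distrib _ _).symm
  have hu0 : u 0 = x := rfl
  have hun : u n = g.next^[n] x := rfl
  rw [split1, split0, hoff, hA, hB, hA2, hB2]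
  rw [hsplitsumA, hsplitsumB]
  rw [hu0] at htel2
  rw [hun] at htel2
  split_ifs with c1 c2 <;> linarith [htel2]

end Redirect

section Surgeries

variable [Fintype V] {Ve : Sym2 V → ℝ} {Vp : V → ℝ} {k : ℕ}

lemma notW_before {g : WGraph G W} {x v : V} {n : ℕ} (hn : g.next^[n] x = v) (hv : v ∉ W)
    {j : ℕ} (hj : j ≤ n) : g.next^[j] x ∉ W := by
  intro hjW
  exact hv (by rw [← hn, iter_stay g hjW hj]; exact hjW)

/-- SWAP: the sink of any vertex has minimal potential among... (compared with the vertex) -/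
theorem sink_min {g : WGraph G W} (hopt : IsOptimalWGraph G Ve Vp k W g) (x : V) :
    Vp (gsink g x) ≤ Vp x := by
  by_cases hx : x ∈ W
  · rw [gsink_of_mem g hx]
  set n := sinkIdx g x with hn
  set w := gsink g x with hw
  have hwW : w ∈ W := gsink_mem g x
  have hun : g.next^[n] x = w := rfl
  set W₁ : Finset V := insert x (W.erase w) with hW₁
  have hxW₁ : x ∈ W₁ := Finset.mem_insert_self _ _
  have h1 : ∀ j, j < n → g.next^[j] x ∉ W := fun j hj => sinkIdx_min g hj
  have H : RHyp g x n x W₁ := by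
    refine ⟨h1, ?_, ?_, ?_, Or.inl ⟨rfl, hxW₁⟩⟩
    · intro j hj1 hjn hmem
      rcases Finset.mem_insert.mp hmem with he | he
      · exact orbit_inj g x hj1
          (fun i hi => h1 i (lt_of_lt_of_le hi hjn)) he.symm
      · rcases lt_or_eq_of_le hjn with hlt | rfl
        · exact h1 j hlt (Finset.mem_of_mem_erase he)
        · exact (Finset.notMem_erase _ _) (hun ▸ he)
    · intro z hzW hz1
      rw [hun]
      by_contra hne
      exact hz1 (Finset.mem_insert_of_mem (Finset.mem_erase.mpr ⟨fun h => hne (h ▸ rfl), hzW⟩))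
    · intro z hz1 hzW
      rcases Finset.mem_insert.mp hz1 with he | he
      · exact he
      · exact absurd (Finset.mem_of_mem_erase he) hzW
  have hcard : W₁.card = k := by
    rw [hW₁, Finset.card_insert_of_notMem (fun hc => hx (Finset.mem_of_mem_erase hc)),
      Finset.card_erase_of_mem hwW, ← hopt.1]
    have : 1 ≤ W.card := Finset.card_pos.mpr ⟨w, hwW⟩
    omega
  have hcost := redirect_cost H Ve Vp
  rw [if_pos hxW₁, if_pos hxW₁, if_pos (hun ▸ hwW : g.next^[n] x ∈ W),
    if_pos (hun ▸ hwW : g.next^[n] x ∈ W), hun] at hcost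
  have hle := hopt.2 W₁ (redirect H) hcard
  linarith

/-- SPLIT: cut the arrow at `v` and make `m` (whose orbit passes through `v`) a new sink -/
theorem split_bound {W' : Finset V} {g' : WGraph G W'}
    (hopt' : IsOptimalWGraph G Ve Vp (k+1) W' g')
    (g : WGraph G W) (hW : W.card = k) {v m : V} (hv : v ∉ W) (hm : reach g m v) :
    wcost Ve Vp g' ≤ wcost Ve Vp g - Ve s(v, g.next v) + Vp m := by
  obtain ⟨n, hn⟩ := hm
  have hmW : m ∉ W := not_mem_of_reach ⟨n, hn⟩ hv
  set W₁ : Finset V := insert m W with hW₁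
  have hmW₁ : m ∈ W₁ := Finset.mem_insert_self _ _
  have h1' : ∀ j, j ≤ n → g.next^[j] m ∉ W := fun j hj => notW_before hn hv hj
  have H : RHyp g m n m W₁ := by
    refine ⟨fun j hj => h1' j (le_of_lt hj), ?_, ?_, ?_, Or.inl ⟨rfl, hmW₁⟩⟩
    · intro j hj1 hjn hmem
      rcases Finset.mem_insert.mp hmem with he | he
      · exact orbit_inj g m hj1 (fun i hi => h1' i (le_of_lt (lt_of_lt_of_le hi hjn))) he.symm
      · exact h1' j hjn he
    · intro z hzW hz1
      exact absurd (Finset.mem_insert_of_mem hzW) hz1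
    · intro z hz1 hzW
      rcases Finset.mem_insert.mp hz1 with he | he
      · exact he
      · exact absurd he hzW
  have hcard : W₁.card = k + 1 := by
    rw [hW₁, Finset.card_insert_of_notMem hmW, hW]
  have hcost := redirect_cost H Ve Vp
  rw [if_pos hmW₁, if_pos hmW₁, if_neg (hn ▸ hv : g.next^[n] m ∉ W),
    if_neg (hn ▸ hv : g.next^[n] m ∉ W), hn] at hcost
  have hle := hopt'.2 W₁ (redirect H) hcard
  linarith

/-- MERGE: connect the component of `a` (sink dropped) to that of `b` -/
theorem merge_bound {g : WGraph G W} (hopt : IsOptimalWGraph G Ve Vp k W g)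
    {W' : Finset V} (g' : WGraph G W') (hW' : W'.card = k + 1) {a b : V}
    (hab : G.Adj a b) (hsinks : gsink g' b ≠ gsink g' a) :
    wcost Ve Vp g ≤ wcost Ve Vp g' + Ve s(a, b) - Vp (gsink g' a) := by
  set n := sinkIdx g' a with hn
  set σ := gsink g' a with hσ
  have hσW : σ ∈ W' := gsink_mem g' a
  have hun : g'.next^[n] a = σ := rfl
  set W₁ : Finset V := W'.erase σ with hW₁
  have haW₁ : a ∉ W₁ := by
    by_cases haW : a ∈ W'
    · rw [hW₁, hσ, gsink_of_mem g' haW]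
      exact Finset.notMem_erase _ _
    · exact fun hc => haW (Finset.mem_of_mem_erase hc)
  have h1 : ∀ j, j < n → g'.next^[j] a ∉ W' := fun j hj => sinkIdx_min g' hj
  have H : RHyp g' a n b W₁ := by
    refine ⟨h1, ?_, ?_, ?_, Or.inr ⟨hab, ?_, haW₁⟩⟩
    · intro j hj1 hjn hmem
      have hjW : g'.next^[j] a ∈ W' := Finset.mem_of_mem_erase hmem
      rcases lt_or_eq_of_le hjn with hlt | rfl
      · exact h1 j hlt hjW
      · exact (Finset.notMem_erase _ _) (hun ▸ hmem)
    · intro z hzW hz1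
      rw [hun]
      by_contra hne
      exact hz1 (Finset.mem_erase.mpr ⟨fun h => hne (h ▸ rfl), hzW⟩)
    · intro z hz1 hzW
      exact absurd (Finset.mem_of_mem_erase hz1) hzW
    · intro mm j hj he
      apply hsinks
      have e1 : gsink g' (g'.next^[mm] b) = gsink g' b := gsink_iterate g' b mm
      have e2 : gsink g' (g'.next^[j] a) = gsink g' a := gsink_iterate g' a j
      rw [← e1, he, e2, hσ]
  have hcard : W₁.card = k := by
    rw [hW₁, Finset.card_erase_of_mem hσW, hW']
    omega
  have hcost := redirect_cost H Ve Vp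
  rw [if_neg haW₁, if_neg haW₁, if_pos (hun ▸ hσW : g'.next^[n] a ∈ W'),
    if_pos (hun ▸ hσW : g'.next^[n] a ∈ W'), hun] at hcost
  have hle := hopt.2 W₁ (redirect H) hcard
  linarith

/-- SPLICE: exchange the arrow at `v` for the edge `(z,y)` -/
theorem splice_le {g : WGraph G W} (hopt : IsOptimalWGraph G Ve Vp k W g)
    {v z y : V} (hv : v ∉ W) (hz : reach g z v) (hy : ¬ reach g y v) (hadj : G.Adj z y) :
    Ve s(v, g.next v) ≤ Ve s(z, y) := by
  obtain ⟨n, hn⟩ := hz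
  have hzW : z ∉ W := not_mem_of_reach ⟨n, hn⟩ hv
  have h1' : ∀ j, j ≤ n → g.next^[j] z ∉ W := fun j hj => notW_before hn hv hj
  have H : RHyp g z n y W := by
    refine ⟨fun j hj => h1' j (le_of_lt hj), fun j _ hjn => h1' j hjn, ?_, ?_,
      Or.inr ⟨hadj, ?_, hzW⟩⟩
    · intro zz hzW' hz1
      exact absurd hzW' hz1
    · intro zz hz1 hzW'
      exact absurd hz1 hzW'
    · intro mm j hj he
      apply hy
      refine reach_trans (g := g) ⟨mm, he⟩ ?_
      exact ⟨n - j, by rw [← Function.iterate_add_apply, Nat.sub_add_cancel hj, hn]⟩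
  have hcost := redirect_cost H Ve Vp
  rw [if_neg hzW, if_neg hzW, if_neg (hn ▸ hv : g.next^[n] z ∉ W),
    if_neg (hn ▸ hv : g.next^[n] z ∉ W), hn] at hcost
  have hle := hopt.2 W (redirect H) hopt.1
  linarith

end Surgeries

section MST

open SimpleGraph

variable [Fintype V]

lemma walk_split_at_edge {G0 : SimpleGraph V} {a b : V} (p : G0.Walk a b)
    (hnd : p.edges.Nodup) {f : Sym2 V} (hf : f ∈ p.edges) :
    ∃ (z₁ y₁ : V) (p₁ : G0.Walk a z₁) (p₂ : G0.Walk y₁ b),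
      f = s(z₁, y₁) ∧ f ∉ p₁.edges ∧ f ∉ p₂.edges := by
  induction p with
  | nil => simp at hf
  | @cons u u' w h q ih =>
    rw [Walk.edges_cons] at hf hnd
    rcases List.mem_cons.mp hf with he | he
    · refine ⟨u, u', Walk.nil, q, he, by simp, ?_⟩
      rw [he]
      exact (List.nodup_cons.mp hnd).1
    · obtain ⟨z₁, y₁, p₁, p₂, hfe, h1, h2⟩ := ih (List.nodup_cons.mp hnd).2 he
      refine ⟨z₁, y₁, Walk.cons h p₁, p₂, hfe, ?_, h2⟩
      rw [Walk.edges_cons]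
      intro hc
      rcases List.mem_cons.mp hc with hc | hc
      · exact (List.nodup_cons.mp hnd).1 (hc ▸ he)
      · exact h1 hc

variable {c : Sym2 V → ℝ} {T : SimpleGraph V}

theorem mst_cycle_property
    (hgen2 : ∀ e ∈ G.edgeSet, ∀ f ∈ G.edgeSet, c e = c f → e = f)
    (hT : IsMST G c T) {a b : V} (hab : G.Adj a b) (hαT : s(a, b) ∉ T.edgeSet)
    (p : T.Walk a b) (hp : p.IsPath) {f : Sym2 V} (hf : f ∈ p.edges) :
    c f < c s(a, b) := by
  classical
  have hne : a ≠ b := hab.ne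
  have hfT : f ∈ T.edgeSet := p.edges_subset_edgeSet hf
  have hfG : f ∈ G.edgeSet := edgeSet_subset_edgeSet.mpr hT.2.1 hfT
  have hαG : s(a, b) ∈ G.edgeSet := hab
  have hfα : f ≠ s(a, b) := fun h => hαT (h ▸ hfT)
  obtain ⟨z₁, y₁, p₁, p₂, hfe, hf1, hf2⟩ := walk_split_at_edge p hp.edges_nodup hf
  set Tf : SimpleGraph V := T \ fromEdgeSet {f} with hTf
  set T' : SimpleGraph V := Tf ⊔ fromEdgeSet {s(a, b)} with hT'
  have hTfadj : ∀ {v w : V}, Tf.Adj v w ↔ T.Adj v w ∧ s(v, w) ≠ f := by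
    intro v w
    rw [hTf, sdiff_adj, fromEdgeSet_adj]
    constructor
    · rintro ⟨h1, h2⟩
      exact ⟨h1, fun hc => h2 ⟨hc, h1.ne⟩⟩
    · rintro ⟨h1, h2⟩
      exact ⟨h1, fun hc => h2 hc.1⟩
  have hTfe : Tf.edgeSet = T.edgeSet \ {f} := by
    rw [hTf, edgeSet_sdiff, edgeSet_fromEdgeSet]
    ext e
    simp only [Set.mem_diff, Set.mem_singleton_iff, Set.mem_setOf_eq]
    constructor
    · rintro ⟨h1, h2⟩
      exact ⟨h1, fun hc => h2 ⟨hc, fun hd => (T.not_isDiag_of_mem_edgeSet (hc ▸ h1)) hd⟩⟩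
    · rintro ⟨h1, h2⟩
      exact ⟨h1, fun hc => h2 hc.1⟩
  have hαTf : s(a, b) ∉ Tf.edgeSet := fun hc => hαT (hTfe ▸ hc).1
  have hT'e : T'.edgeSet = Tf.edgeSet ∪ {s(a, b)} := by
    rw [hT', edgeSet_sup, edgeSet_fromEdgeSet]
    congr 1
    ext e
    simp only [Set.mem_diff, Set.mem_singleton_iff, Set.mem_setOf_eq]
    constructor
    · rintro ⟨h1, _⟩; exact h1
    · rintro rfl
      exact ⟨rfl, fun hd => (G.not_isDiag_of_mem_edgeSet hαG) hd⟩
  have hT'le : T' ≤ G := by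
    rw [hT']
    apply sup_le
    · exact le_trans (by rw [hTf]; exact sdiff_le) hT.2.1
    · intro v w hvw
      rw [fromEdgeSet_adj, Set.mem_singleton_iff] at hvw
      rcases Sym2.eq_iff.mp hvw.1 with ⟨rfl, rfl⟩ | ⟨rfl, rfl⟩
      · exact hab
      · exact hab.symm
  -- the split pieces live in Tf
  have hp₁Tf : ∀ e ∈ p₁.edges, e ∈ Tf.edgeSet := by
    intro e he
    rw [hTfe]
    exact ⟨p₁.edges_subset_edgeSet he, fun hc => hf1 (hc ▸ he)⟩
  have hp₂Tf : ∀ e ∈ p₂.edges, e ∈ Tf.edgeSet := by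
    intro e he
    rw [hTfe]
    exact ⟨p₂.edges_subset_edgeSet he, fun hc => hf2 (hc ▸ he)⟩
  have hTfle : Tf ≤ T' := le_sup_left
  have hT'ab : T'.Adj a b := by
    apply le_sup_right (b := fromEdgeSet {s(a,b)})
    rw [fromEdgeSet_adj]
    exact ⟨rfl, hne⟩
  have hreachT' : ∀ u : V, ∀ w : V, T.Reachable u w → T'.Reachable u w := by
    have hz₁y₁ : T'.Reachable z₁ y₁ := by
      have r1 : T'.Reachable z₁ a := ⟨(p₁.transfer Tf hp₁Tf).reverse.mapLe hTfle⟩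
      have r2 : T'.Reachable b y₁ := ⟨(p₂.transfer Tf hp₂Tf).reverse.mapLe hTfle⟩
      exact r1.trans (⟨Walk.cons hT'ab Walk.nil⟩ : T'.Reachable a b) |>.trans r2
    intro u w hr
    obtain ⟨q⟩ := hr
    induction q with
    | nil => exact ⟨Walk.nil⟩
    | @cons v v' w' hadj q ih =>
      refine Reachable.trans ?_ ih
      by_cases hc : s(v, v') = f
      · rcases Sym2.eq_iff.mp (hc.trans hfe) with ⟨rfl, rfl⟩ | ⟨rfl, rfl⟩
        · exact hz₁y₁
        · exact hz₁y₁.symm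
      · exact ⟨Walk.cons (hTfle (hTfadj.mpr ⟨hadj, hc⟩)) Walk.nil⟩
  have hconn : T'.Connected := by
    rw [connected_iff]
    exact ⟨fun u w => hreachT' u w (hT.1.isConnected.preconnected u w), hT.1.isConnected.nonempty⟩
  -- f is a bridge in T
  have hbridge : ¬ Tf.Reachable z₁ y₁ := by
    have hbr := isAcyclic_iff_forall_edge_isBridge.mp hT.1.IsAcyclic (hfe ▸ hfT)
    rw [isBridge_iff] at hbr
    rw [hTf, hfe]
    exact hbr
  have hacyc : T'.IsAcyclic := by
    intro v cyc hcyc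
    by_cases hα : s(a, b) ∈ cyc.edges
    · have hre : (T' \ fromEdgeSet {s(a, b)}).Reachable a b :=
        (adj_and_reachable_delete_edges_iff_exists_cycle.mpr ⟨v, cyc, hcyc, hα⟩).2
      have hsd : T' \ fromEdgeSet {s(a, b)} ≤ Tf := by
        rw [hT']
        intro u w huw
        rw [sdiff_adj, sup_adj] at huw
        rcases huw.1 with h1 | h1
        · exact h1
        · exact absurd h1 huw.2
      have hre2 : Tf.Reachable a b := hre.mono hsd
      apply hbridge
      have r1 : Tf.Reachable z₁ a := ⟨(p₁.transfer Tf hp₁Tf).reverse⟩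
      have r2 : Tf.Reachable b y₁ := ⟨(p₂.transfer Tf hp₂Tf).reverse⟩
      exact (r1.trans hre2).trans r2
    · have hedges : ∀ e ∈ cyc.edges, e ∈ T.edgeSet := by
        intro e he
        have heT' : e ∈ T'.edgeSet := cyc.edges_subset_edgeSet he
        rw [hT'e] at heT'
        rcases heT' with h1 | h1
        · exact (hTfe ▸ h1).1
        · exact absurd (Set.mem_singleton_iff.mp h1 ▸ he) hα
      exact hT.1.IsAcyclic (cyc.transfer T hedges) (hcyc.transfer hedges)
  have htree' : T'.IsTree := ⟨hconn, hacyc⟩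
  -- sums
  have hfinTf : Tf.edgeSet.Finite := Set.toFinite _
  have hTsum : (∑ᶠ e ∈ T.edgeSet, c e) = (∑ᶠ e ∈ Tf.edgeSet, c e) + c f := by
    have hset : T.edgeSet = Tf.edgeSet ∪ {f} := by
      rw [hTfe]
      rw [Set.diff_union_self]
      exact (Set.union_eq_self_of_subset_right (Set.singleton_subset_iff.mpr hfT)).symm
    rw [hset, finsum_mem_union (by rw [hTfe]; simp) hfinTf (Set.finite_singleton f),
      finsum_mem_singleton]
  have hT'sum : (∑ᶠ e ∈ T'.edgeSet, c e) = (∑ᶠ e ∈ Tf.edgeSet, c e) + c s(a, b) := by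
    rw [hT'e, finsum_mem_union (by simp [hαTf]) hfinTf (Set.finite_singleton _),
      finsum_mem_singleton]
  have hle := hT.2.2 T' htree' hT'le
  rw [hTsum, hT'sum] at hle
  have hlef : c f ≤ c s(a, b) := by linarith
  rcases lt_or_eq_of_le hlef with hlt | heq
  · exact hlt
  · exact absurd (hgen2 f hfG s(a, b) hαG heq) hfα

end MST

section ForestInMST

open SimpleGraph

variable [Fintype V] {Ve : Sym2 V → ℝ} {Vp : V → ℝ} {T : SimpleGraph V} {k : ℕ}

lemma no_return {g : WGraph G W} {p₁ : V} (hp : p₁ ∉ W) (hm : reach g (g.next p₁) p₁) :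
    False := by
  obtain ⟨m, hm⟩ := hm
  have hper : g.next^[m+1] p₁ = p₁ := by
    rw [Function.iterate_succ_apply]; exact hm
  have hj : ∀ j : ℕ, g.next^[j*(m+1)] p₁ = p₁ := by
    intro j
    induction j with
    | zero => simp
    | succ j ih =>
      have : (j+1)*(m+1) = (m+1) + j*(m+1) := by ring
      rw [this, Function.iterate_add_apply, ih, hper]
  have h1 : g.next^[(sinkIdx g p₁)*(m+1)] p₁ ∈ W := by
    rw [iter_stay g (sinkIdx_spec g p₁) (Nat.le_mul_of_pos_right _ (Nat.succ_pos m))]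
    exact sinkIdx_spec g p₁
  rw [hj _] at h1
  exact hp h1

lemma walk_cross {G0 : SimpleGraph V} (P : V → Prop) :
    ∀ {a b : V} (w : G0.Walk a b), P a → ¬ P b →
    ∃ z y, G0.Adj z y ∧ P z ∧ ¬ P y ∧ s(z, y) ∈ w.edges := by
  intro a b w
  induction w with
  | nil => intro ha hb; exact absurd ha hb
  | @cons u u' w' h q ih =>
    intro ha hb
    by_cases hP : P u'
    · obtain ⟨z, y, h1, h2, h3, h4⟩ := ih hP hb
      exact ⟨z, y, h1, h2, h3, by rw [Walk.edges_cons]; exact List.mem_cons_of_mem _ h4⟩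
    · exact ⟨u, u', h, ha, hP, by rw [Walk.edges_cons]; exact List.mem_cons_self⟩

theorem wEdges_sub_mst
    (hgen2 : ∀ e ∈ G.edgeSet, ∀ f ∈ G.edgeSet, Ve e = Ve f → e = f)
    (hT : IsMST G Ve T) {g : WGraph G W} (hopt : IsOptimalWGraph G Ve Vp k W g) :
    ∀ e ∈ wEdges g, e ∈ T.edgeSet := by
  intro e he
  obtain ⟨p₁, hp₁, rfl⟩ := Finset.mem_image.mp he
  by_contra hnotT
  have hp₁W : p₁ ∉ W := Finset.mem_compl.mp hp₁
  have hadj : G.Adj p₁ (g.next p₁) := g.adj_of_not_sink p₁ hp₁W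
  obtain ⟨pw⟩ := hT.1.isConnected.preconnected p₁ (g.next p₁)
  set pp := pw.bypass with hpp
  have hppPath : pp.IsPath := Walk.bypass_isPath pw
  obtain ⟨z, y, hTzy, hz, hy, hmem⟩ :=
    walk_cross (fun v => reach g v p₁) pp (reach_refl g p₁) (fun hr => no_return hp₁W hr)
  have hcyc := mst_cycle_property hgen2 hT hadj hnotT pp hppPath hmem
  have hsplice := splice_le hopt hp₁W hz hy (hT.2.1 hTzy)
  linarith

end ForestInMST

section Helpers

open SimpleGraph

variable [Fintype V] {Ve : Sym2 V → ℝ} {Vp : V → ℝ} {T : SimpleGraph V} {k : ℕ}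

lemma seq_cross (P : V → Prop) (u : ℕ → V) (N : ℕ) (h0 : P (u 0)) (hN : ¬ P (u N)) :
    ∃ i, i < N ∧ P (u i) ∧ ¬ P (u (i+1)) := by
  induction N with
  | zero => exact absurd h0 hN
  | succ N ih =>
    by_cases hP : P (u N)
    · exact ⟨N, Nat.lt_succ_self N, hP, hN⟩
    · obtain ⟨i, h1, h2, h3⟩ := ih hP
      exact ⟨i, Nat.lt_succ_of_lt h1, h2, h3⟩

lemma sink_eq_of_reach {W' : Finset V} {g' : WGraph G W'} {s x : V} (hs : s ∈ W')
    (h : reach g' x s) : gsink g' x = s :=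
  (gsink_of_reach h).symm.trans (gsink_of_mem g' hs)

lemma maximum_lt_of_le {l : List ℝ} {c0 aa : ℝ} (h : ∀ m ∈ l, m ≤ c0) (hlt : c0 < aa) :
    l.maximum < (aa : WithBot ℝ) := by
  rcases hm : l.maximum with _ | m
  · exact WithBot.bot_lt_coe aa
  · have hmem := (List.maximum_eq_coe_iff.mp hm).1
    show (m : WithBot ℝ) < (aa : WithBot ℝ)
    exact WithBot.coe_lt_coe.mpr (lt_of_le_of_lt (h m hmem) hlt)

lemma orbit_walk (g : WGraph G W) (hsub : ∀ f ∈ wEdges g, f ∈ T.edgeSet) (x : V) (n : ℕ)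
    (hnW : ∀ j, j < n → g.next^[j] x ∉ W) :
    ∃ ow : T.Walk x (g.next^[n] x),
      ow.support = (List.range (n+1)).map (fun j => g.next^[j] x) ∧
      ow.edges = (List.range n).map (fun j => s(g.next^[j] x, g.next^[j+1] x)) := by
  induction n with
  | zero => exact ⟨Walk.nil, by simp, by simp⟩
  | succ n ih =>
    obtain ⟨ow, hs, he⟩ := ih (fun j hj => hnW j (Nat.lt_succ_of_lt hj))
    have hadjT : T.Adj (g.next^[n] x) (g.next^[n+1] x) := by
      have hmem : s(g.next^[n] x, g.next (g.next^[n] x)) ∈ wEdges g :=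
        Finset.mem_image.mpr ⟨g.next^[n] x,
          Finset.mem_compl.mpr (hnW n (Nat.lt_succ_self n)), rfl⟩
      have h2 := hsub _ hmem
      rw [mem_edgeSet] at h2
      rw [Function.iterate_succ_apply']
      exact h2
    refine ⟨ow.concat hadjT, ?_, ?_⟩
    · rw [Walk.support_concat, hs]
      simp [List.range_succ]
    · rw [Walk.edges_concat, he, List.concat_eq_append]
      simp [List.range_succ]

lemma orbit_walk_sink (g : WGraph G W) (hsub : ∀ f ∈ wEdges g, f ∈ T.edgeSet) (x : V) :
    ∃ ow : T.Walk x (gsink g x), ∀ f ∈ ow.edges, f ∈ wEdges g := by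
  obtain ⟨ow, _, he⟩ := orbit_walk g hsub x (sinkIdx g x) (fun j hj => sinkIdx_min g hj)
  refine ⟨ow, ?_⟩
  intro f hf
  replace hf : f ∈ ow.edges := hf
  rw [he] at hf
  obtain ⟨j, hj, rfl⟩ := List.mem_map.mp hf
  rw [show s(g.next^[j] x, g.next^[j+1] x) = s(g.next^[j] x, g.next (g.next^[j] x)) by
    rw [Function.iterate_succ_apply']]
  exact Finset.mem_image.mpr ⟨g.next^[j] x,
    Finset.mem_compl.mpr (sinkIdx_min g (List.mem_range.mp hj)), rfl⟩

lemma reach_along {W' : Finset V} {g' : WGraph G W'} {s : V} {c0 : ℝ} (hTG : T ≤ G)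
    (hb : ∀ z z₁, G.Adj z z₁ → reach g' z s → ¬ reach g' z₁ s → c0 ≤ Ve s(z, z₁)) :
    ∀ {z x : V} (qk : T.Walk z x), reach g' z s → (∀ f ∈ qk.edges, Ve f < c0) →
      reach g' x s := by
  intro z x qk
  induction qk with
  | nil => exact fun h _ => h
  | @cons u u' w' h qk ih =>
    intro hu hed
    by_cases hu' : reach g' u' s
    · exact ih hu' (fun f hf => hed f (by rw [Walk.edges_cons]; exact List.mem_cons_of_mem _ hf))
    · exact absurd (hb u u' (hTG h) hu hu')
        (not_le.mpr (hed s(u, u') (by rw [Walk.edges_cons]; exact List.mem_cons_self)))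

end Helpers

end FCP

open FCP

/-- under the genericness assumption, the largest Freidlin's cycle `C`
containing the new sink `s` of the optimal `(k+1)`-sink `W`-graph and not containing any
state of smaller potential equals
`{x ∈ t | max of V_{ij} over the tree path from s to x < V_{p* q*}}`, where `t` is the
component of the optimal forest containing `s` (the states whose arrows lead to `s`) and
`e = (p*, q*)` is the edge removed when passing from the optimal `k`-sink forest; in
particular `C ⊆ t`. -/
theorem freidlin_cycle_of_new_sink {V : Type*} [Fintype V] [DecidableEq V]
    (G : SimpleGraph V) (hG : G.Connected) (Ve : Sym2 V → ℝ) (Vp : V → ℝ)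
    (hgen : Generic G Ve Vp)
    (T : SimpleGraph V) (hT : IsMST G Ve T) (k : ℕ) (hk : 1 ≤ k)
    (W : Finset V) (g : WGraph G W) (hopt : IsOptimalWGraph G Ve Vp k W g)
    (W' : Finset V) (g' : WGraph G W') (hopt' : IsOptimalWGraph G Ve Vp (k + 1) W' g')
    (s : V) (hs : s ∈ W') (hsW : s ∉ W)
    (e : Sym2 V) (he : e ∈ wEdges g) (he' : e ∉ wEdges g')
    (C : Set V)
    (hC : IsFreidlinCycle T Ve s C) (hsC : s ∈ C)
    (hCmin : ∀ x ∈ C, Vp s ≤ Vp x)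
    (hClargest : ∀ C' : Set V, IsFreidlinCycle T Ve s C' → s ∈ C' →
      (∀ x ∈ C', Vp s ≤ Vp x) → C' ⊆ C) :
    C = {x : V | (∃ n : ℕ, g'.next^[n] x = s) ∧ ∀ p : T.Walk s x, p.IsPath →
        (p.edges.map Ve).maximum < (Ve e : WithBot ℝ)} ∧
      C ⊆ {x : V | ∃ n : ℕ, g'.next^[n] x = s} := by
  classical
  have hVpinj := hgen.1
  have hVe2 := hgen.2.1
  have hdiff := hgen.2.2
  -- optimal forests lie in the MST
  have hsubF : ∀ f ∈ wEdges g, f ∈ T.edgeSet := FCP.wEdges_sub_mst hVe2 hT hopt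
  have hsubF' : ∀ f ∈ wEdges g', f ∈ T.edgeSet := FCP.wEdges_sub_mst hVe2 hT hopt'
  -- s has minimal potential on its g'-component
  have hsmin : ∀ x, reach g' x s → Vp s ≤ Vp x := by
    intro x hx
    have h1 := sink_min hopt' x
    rwa [sink_eq_of_reach hs hx] at h1
  -- the old sink of s
  have hwW : gsink g s ∈ W := gsink_mem g s
  have hws : gsink g s ≠ s := fun h => hsW (h ▸ hwW)
  have hwlt : Vp (gsink g s) < Vp s :=
    lt_of_le_of_ne (sink_min hopt s) (fun h => hws (hVpinj h))
  have hwnr : ¬ reach g' (gsink g s) s := fun hr => absurd (hsmin _ hr) (not_le.mpr hwlt)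
  -- crossing point on the g-orbit of s
  obtain ⟨i, hiN, hPi, hPi1⟩ := seq_cross (fun v => reach g' v s) (fun j => g.next^[j] s)
    (sinkIdx g s) (reach_refl g' s) hwnr
  have ha0W : g.next^[i] s ∉ W := sinkIdx_min g hiN
  have hb0 : g.next^[i+1] s = g.next (g.next^[i] s) := Function.iterate_succ_apply' _ _ _
  have hadj0 : G.Adj (g.next^[i] s) (g.next^[i+1] s) := by
    rw [hb0]; exact g.adj_of_not_sink _ ha0W
  have hsinka0 : gsink g' (g.next^[i] s) = s := sink_eq_of_reach hs hPi
  have hsinkb0 : gsink g' (g.next^[i+1] s) ≠ gsink g' (g.next^[i] s) := by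
    rw [hsinka0]
    intro h
    apply hPi1
    have hrg := reach_gsink g' (g.next^[i+1] s)
    rwa [h] at hrg
  have h5a := split_bound hopt' g hopt.1 ha0W (⟨i, rfl⟩ : reach g s (g.next^[i] s))
  have h5b := merge_bound hopt g' hopt'.1 hadj0 hsinkb0
  rw [hsinka0] at h5b
  rw [← hb0] at h5a
  have hKEY0 : Ve s(g.next^[i] s, g.next^[i+1] s)
      = wcost Ve Vp g - wcost Ve Vp g' + Vp s := by linarith
  -- the given edge e
  obtain ⟨pv, hpc, hpe⟩ := Finset.mem_image.mp he
  subst hpe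
  have hpW : pv ∉ W := Finset.mem_compl.mp hpc
  have hadjpq : G.Adj pv (g.next pv) := g.adj_of_not_sink pv hpW
  have hpq : pv ≠ g.next pv := hadjpq.ne
  have heT : s(pv, g.next pv) ∈ T.edgeSet := hsubF _ he
  have hTpq : T.Adj pv (g.next pv) := (SimpleGraph.mem_edgeSet T).mp heT
  -- the endpoints of e lie in different components of g'
  have hdiffsink : gsink g' (g.next pv) ≠ gsink g' pv := by
    intro hqq
    obtain ⟨wp, hwp⟩ := orbit_walk_sink g' hsubF' pv
    obtain ⟨wq, hwq⟩ := orbit_walk_sink g' hsubF' (g.next pv)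
    set combined : T.Walk pv (g.next pv) := wp.append ((wq.copy rfl hqq).reverse)
      with hcombined
    have hcomb : ∀ f ∈ combined.edges, f ∈ wEdges g' := by
      intro f hf
      rw [hcombined, SimpleGraph.Walk.edges_append] at hf
      rcases List.mem_append.mp hf with h1 | h1
      · exact hwp f h1
      · rw [SimpleGraph.Walk.edges_reverse, List.mem_reverse,
          SimpleGraph.Walk.edges_copy] at h1
        exact hwq f h1
    set path1 : T.Walk pv (g.next pv) := SimpleGraph.Walk.cons hTpq SimpleGraph.Walk.nil
      with hpath1def
    have hpath1 : path1.IsPath := by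
      rw [hpath1def]
      simp [SimpleGraph.Walk.isPath_def, hpq]
    obtain ⟨pu, hpu, huniq⟩ := hT.1.existsUnique_path pv (g.next pv)
    have e1 : path1 = pu := huniq path1 hpath1
    have e2 : combined.bypass = pu := huniq combined.bypass (SimpleGraph.Walk.bypass_isPath _)
    have hmem1 : s(pv, g.next pv) ∈ path1.edges := by
      rw [hpath1def]
      simp
    rw [e1, ← e2] at hmem1
    exact he' (hcomb _ (SimpleGraph.Walk.edges_bypass_subset _ hmem1))
  -- (C1): the g'-sink of pv flows through pv under g
  have hC1 : reach g (gsink g' pv) pv := by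
    by_contra hnr
    obtain ⟨i', hi', hA, hB⟩ := seq_cross (fun z => reach g z pv) (fun j => g'.next^[j] pv)
      (sinkIdx g' pv) (reach_refl g pv) hnr
    have haW' : g'.next^[i'] pv ∉ W' := sinkIdx_min g' hi'
    have hb' : g'.next^[i'+1] pv = g'.next (g'.next^[i'] pv) := Function.iterate_succ_apply' _ _ _
    have hadjab : G.Adj (g'.next^[i'] pv) (g'.next^[i'+1] pv) := by
      rw [hb']; exact g'.adj_of_not_sink _ haW'
    have hyq : ¬ reach g' (g.next pv) (g'.next^[i'] pv) := by
      intro hr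
      apply hdiffsink
      have e1 : gsink g' (g'.next^[i'] pv) = gsink g' (g.next pv) := gsink_of_reach hr
      have e2 : gsink g' (g'.next^[i'] pv) = gsink g' pv := gsink_of_reach ⟨i', rfl⟩
      rw [← e1, e2]
    have hs1 := splice_le hopt' haW' (⟨i', rfl⟩ : reach g' pv (g'.next^[i'] pv)) hyq hadjpq
    have hs2 := splice_le hopt hpW hA hB hadjab
    rw [hb'] at hs2
    have heqv : Ve s(pv, g.next pv) = Ve s(g'.next^[i'] pv, g'.next (g'.next^[i'] pv)) :=
      le_antisymm hs2 hs1
    have hedq : s(pv, g.next pv) = s(g'.next^[i'] pv, g'.next (g'.next^[i'] pv)) :=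
      hVe2 _ ((SimpleGraph.mem_edgeSet G).mpr hadjpq) _
        ((SimpleGraph.mem_edgeSet G).mpr (g'.adj_of_not_sink _ haW')) heqv
    exact he' (hedq ▸ Finset.mem_image.mpr ⟨g'.next^[i'] pv, Finset.mem_compl.mpr haW', rfl⟩)
  -- KEY equality for e
  have h6c := split_bound hopt' g hopt.1 hpW hC1
  have h6d := merge_bound hopt g' hopt'.1 hadjpq hdiffsink
  have hKEYe : Ve s(pv, g.next pv) - Vp (gsink g' pv)
      = Ve s(g.next^[i] s, g.next^[i+1] s) - Vp s := by linarith
  obtain ⟨heqe, heqsink⟩ := hdiff _ ((SimpleGraph.mem_edgeSet G).mpr hadjpq)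
    _ ((SimpleGraph.mem_edgeSet G).mpr hadj0) _ _ hKEYe
  have hVee : Ve s(pv, g.next pv) = wcost Ve Vp g - wcost Ve Vp g' + Vp s := by
    rw [heqe]; exact hKEY0
  -- boundary edges of the component of s cost at least Ve e
  have hbound : ∀ z z₁, G.Adj z z₁ → reach g' z s → ¬ reach g' z₁ s →
      Ve s(pv, g.next pv) ≤ Ve s(z, z₁) := by
    intro z z₁ hadj hz hz1
    have hsz1 : gsink g' z₁ ≠ gsink g' z := by
      rw [sink_eq_of_reach hs hz]
      intro h
      apply hz1
      have hrg := reach_gsink g' z₁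
      rwa [h] at hrg
    have hmb := merge_bound hopt g' hopt'.1 hadj hsz1
    rw [sink_eq_of_reach hs hz] at hmb
    linarith
  -- B ⊆ t
  have hBt : ∀ x, (∀ pth : T.Walk s x, pth.IsPath →
      ((pth.edges.map Ve).maximum < ((Ve s(pv, g.next pv) : ℝ) : WithBot ℝ))) →
      reach g' x s := by
    intro x hx
    obtain ⟨pw⟩ := hT.1.isConnected.preconnected s x
    have hmax := hx pw.bypass (SimpleGraph.Walk.bypass_isPath pw)
    have hedges : ∀ f ∈ pw.bypass.edges, Ve f < Ve s(pv, g.next pv) := by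
      intro f hf
      have h1 := List.le_maximum_of_mem' (List.mem_map_of_mem (f := Ve) hf)
      exact WithBot.coe_lt_coe.mp (lt_of_le_of_lt h1 hmax)
    exact reach_along hT.2.1 hbound pw.bypass (reach_refl g' s) hedges
  -- bound on edges of the tree path from s to its old sink
  have horbound : ∀ j, j < sinkIdx g s →
      Ve s(g.next^[j] s, g.next^[j+1] s) ≤ wcost Ve Vp g - wcost Ve Vp g' + Vp s := by
    intro j hj
    have hsb := split_bound hopt' g hopt.1 (sinkIdx_min g hj)
      (⟨j, rfl⟩ : reach g s (g.next^[j] s))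
    rw [← (Function.iterate_succ_apply' g.next j s : g.next^[j+1] s = _)] at hsb
    linarith
  obtain ⟨ow0, hos0, hoe0⟩ := orbit_walk g hsubF s (sinkIdx g s)
    (fun j hj => sinkIdx_min g hj)
  have hend : g.next^[sinkIdx g s] s = gsink g s := rfl
  set ow : T.Walk s (gsink g s) := ow0.copy rfl hend with how
  have howpath : ow.IsPath := by
    rw [SimpleGraph.Walk.isPath_def, how, SimpleGraph.Walk.support_copy, hos0]
    apply List.Nodup.map_on _ List.nodup_range
    intro j hj j' hj' hee
    rw [List.mem_range, Nat.lt_succ_iff] at hj hj'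
    rcases lt_trichotomy j j' with hlt | hlt | hlt
    · exact absurd hee (fun hh => orbit_inj g s hlt
        (fun i2 hi2 => sinkIdx_min g (lt_of_lt_of_le hi2 hj')) hh)
    · exact hlt
    · exact absurd hee.symm (fun hh => orbit_inj g s hlt
        (fun i2 hi2 => sinkIdx_min g (lt_of_lt_of_le hi2 hj)) hh)
  have hwC : ∀ pth : T.Walk s (gsink g s), pth.IsPath → ∀ f ∈ pth.edges,
      Ve f ≤ wcost Ve Vp g - wcost Ve Vp g' + Vp s := by
    intro pth hpth f hf
    obtain ⟨pu, hpu, huniq⟩ := hT.1.existsUnique_path s (gsink g s)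
    have e1 : pth = pu := huniq pth hpth
    have e2 : ow = pu := huniq ow howpath
    rw [e1, ← e2, how, SimpleGraph.Walk.edges_copy, hoe0] at hf
    obtain ⟨j, hj, rfl⟩ := List.mem_map.mp hf
    exact horbound j (List.mem_range.mp hj)
  -- the threshold of C is at most Ve e
  obtain ⟨aa, hCa⟩ := hC
  have haa : aa ≤ Ve s(pv, g.next pv) := by
    by_contra hlt
    push_neg at hlt
    have hwmem : gsink g s ∈ C := by
      rw [hCa]
      intro pth hpth
      apply maximum_lt_of_le (c0 := wcost Ve Vp g - wcost Ve Vp g' + Vp s)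
      · intro m hm
        obtain ⟨f, hf, rfl⟩ := List.mem_map.mp hm
        exact hwC pth hpth f hf
      · rw [← hVee]; exact hlt
    exact absurd (hCmin _ hwmem) (not_le.mpr hwlt)
  -- C = B
  set B : Set V := {x : V | ∀ p : T.Walk s x, p.IsPath →
      (p.edges.map Ve).maximum < ((Ve s(pv, g.next pv) : ℝ) : WithBot ℝ)} with hB
  have hCB : C ⊆ B := by
    intro x hx
    rw [hCa] at hx
    intro pth hpth
    exact lt_of_lt_of_le (hx pth hpth) (WithBot.coe_le_coe.mpr haa)
  have hsB : s ∈ B := by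
    intro pth hpth
    cases pth with
    | nil => simpa using WithBot.bot_lt_coe _
    | cons h qk =>
      exact absurd hpth
        (fun hp => ((SimpleGraph.Walk.cons_isPath_iff h qk).mp hp).2 qk.end_mem_support)
  have hBC : B ⊆ C :=
    hClargest B ⟨Ve s(pv, g.next pv), rfl⟩ hsB (fun x hx => hsmin x (hBt x hx))
  have hCeqB : C = B := Set.Subset.antisymm hCB hBC
  constructor
  · rw [hCeqB]
    ext x
    simp only [Set.mem_setOf_eq]
    constructor
    · intro hx
      exact ⟨hBt x hx, hx⟩
    · rintro ⟨_, hx⟩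
      exact hx
  · intro x hx
    rw [hCeqB] at hx
    exact hBt x hx
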